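/- Let f ∈ ℂ[[x,y]] be irreducible of characteristic (b₀,…,b_h) with e_i = gcd(b₀,…,b_i). For each characteristic exponent b_i/b₀, the set T_i(f) of pseudo-balls of height b_i/b₀ meeting Zer f consists of exactly e₀/e_{i−1} pairwise disjoint pseudo-balls, and each B ∈ T_i(f) contains exactly e_{i−1} Newton–Puiseux roots of f; moreover F_B(z) = (z^{e_{i−1}/e_i} − c_B)^{e_i} for some c_B ≠ 0. -/

import Mathlib

attribute [local instance] Classical.propDecidable

open Polynomial

/-!
STATEMENT 12. An irreducible `f ∈ ℂ[[x,y]]` of characteristic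
`(b₀,…,b_h)` has Newton–Puiseux root set `Zer f` equal to the star-orbit
of one root `α` of index `n = b₀` (modelled by coefficient functions
`ℚ → ℂ`).  For the characteristic exponent `b i / b₀` (`1 ≤ i ≤ h`), the
set `T_i(f)` of pseudo-balls of height `b i / b₀` meeting `Zer f`
consists of `e₀/e_{i-1}` pairwise disjoint pseudo-balls, each containing
exactly `e_{i-1}` roots, and for each such ball `B`,
`F_B(z) = ∏_{γ ∈ B ∩ Zer f} (z − lc_B γ) = (z^{e_{i-1}/e_i} − c_B)^{e_i}`
with `c_B ≠ 0`, where `lc_B γ` is the coefficient of `x^{b i / b₀}` in `γ`.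
-/

abbrev PSer : Type := ℚ → ℂ

def contGe (φ ψ : PSer) (r : ℚ) : Prop := ∀ q : ℚ, q < r → φ q = ψ q

def pball (β : PSer) (r : ℚ) : Set PSer := {ψ | contGe β ψ r}

def hasDen (m : ℕ) (φ : PSer) : Prop := ∀ q : ℚ, φ q ≠ 0 → ∃ i : ℕ, q = (i : ℚ) / m

def hasIndex (n : ℕ) (φ : PSer) : Prop :=
  0 < n ∧ hasDen n φ ∧ ∀ m : ℕ, 0 < m → m < n → ¬ hasDen m φ

def posOrder (φ : PSer) : Prop := ∀ q : ℚ, q ≤ 0 → φ q = 0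

noncomputable def starAct (n : ℕ) (ε : ℂ) (φ : PSer) : PSer :=
  fun q => ε ^ (q * n).num.toNat * φ q

def orbit (n : ℕ) (α : PSer) : Set PSer :=
  {γ | ∃ ε : ℂ, ε ^ n = 1 ∧ γ = starAct n ε α}

/-- `F_B(z)` for the pseudo-ball `B = pball β r`:
the product of `z − lc_B γ` over the roots `γ = ε * α` lying in `B`. -/
noncomputable def FB (n : ℕ) (α β : PSer) (r : ℚ) : Polynomial ℂ :=
  ∏ ε ∈ (Polynomial.nthRootsFinset n (1 : ℂ)).filter (fun ε => starAct n ε α ∈ pball β r),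
    (X - C ((starAct n ε α) r))



lemma st12_pow_gcd_one {δ : ℂ} {a b : ℕ} (ha : δ ^ a = 1) (hb : δ ^ b = 1) :
    δ ^ Nat.gcd a b = 1 :=
  orderOf_dvd_iff_pow_eq_one.mp
    (Nat.dvd_gcd (orderOf_dvd_iff_pow_eq_one.mpr ha) (orderOf_dvd_iff_pow_eq_one.mpr hb))

lemma st12_root_ne_zero {N : ℕ} (hN : 0 < N) {x : ℂ} (hx : x ^ N = 1) : x ≠ 0 := by
  intro h0
  rw [h0, zero_pow hN.ne'] at hx
  exact zero_ne_one hx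

lemma st12_coset_filter {N k : ℕ} (hN : 0 < N) {x₀ : ℂ} (hx₀ : x₀ ^ N = 1) :
    (nthRootsFinset N (1 : ℂ)).filter (fun x => x ^ k = x₀ ^ k)
      = (nthRootsFinset (Nat.gcd N k) (1 : ℂ)).image (fun w => x₀ * w) := by
  have hg : 0 < Nat.gcd N k := Nat.gcd_pos_of_pos_left _ hN
  have hx0ne : x₀ ≠ 0 := st12_root_ne_zero hN hx₀
  ext x
  simp only [Finset.mem_filter, Finset.mem_image, Polynomial.mem_nthRootsFinset hN,
    Polynomial.mem_nthRootsFinset hg]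
  constructor
  · rintro ⟨hxN, hxk⟩
    refine ⟨x * x₀⁻¹, ?_, by field_simp⟩
    have h1 : (x * x₀⁻¹) ^ N = 1 := by
      rw [mul_pow, inv_pow, hxN, hx₀]; simp
    have h2 : (x * x₀⁻¹) ^ k = 1 := by
      rw [mul_pow, inv_pow, hxk]
      exact mul_inv_cancel₀ (pow_ne_zero _ hx0ne)
    exact st12_pow_gcd_one h1 h2
  · rintro ⟨w, hw, rfl⟩
    have hwN : w ^ N = 1 := by
      obtain ⟨c, hc⟩ := Nat.gcd_dvd_left N k
      rw [hc, pow_mul, hw, one_pow]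
    have hwk : w ^ k = 1 := by
      obtain ⟨c, hc⟩ := Nat.gcd_dvd_right N k
      rw [hc, pow_mul, hw, one_pow]
    exact ⟨by rw [mul_pow, hx₀, hwN, mul_one], by rw [mul_pow, hwk, mul_one]⟩

lemma st12_coset_card {N k : ℕ} (hN : 0 < N) {x₀ : ℂ} (hx₀ : x₀ ^ N = 1) :
    ((nthRootsFinset N (1 : ℂ)).filter (fun x => x ^ k = x₀ ^ k)).card = Nat.gcd N k := by
  rw [st12_coset_filter hN hx₀,
    Finset.card_image_of_injective _ (mul_right_injective₀ (st12_root_ne_zero hN hx₀)),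
    (Complex.isPrimitiveRoot_exp _ (Nat.gcd_pos_of_pos_left k hN).ne').card_nthRootsFinset]

lemma st12_image_pow {N k : ℕ} (hN : 0 < N) (hk : 0 < k) :
    (nthRootsFinset N (1 : ℂ)).image (fun x => x ^ k)
      = nthRootsFinset (N / Nat.gcd N k) (1 : ℂ) := by
  set g := Nat.gcd N k with hg
  have hgpos : 0 < g := Nat.gcd_pos_of_pos_left _ hN
  have hgN : g ∣ N := Nat.gcd_dvd_left N k
  have hgk : g ∣ k := Nat.gcd_dvd_right N k
  have hM : 0 < N / g := Nat.div_pos (Nat.le_of_dvd hN hgN) hgpos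
  ext x
  simp only [Finset.mem_image, Polynomial.mem_nthRootsFinset hN, Polynomial.mem_nthRootsFinset hM]
  constructor
  · rintro ⟨δ, hδ, rfl⟩
    obtain ⟨k', hk'⟩ := hgk
    obtain ⟨N', hN'⟩ := hgN
    have e1 : N / g = N' := by rw [hN', Nat.mul_div_cancel_left _ hgpos]
    have e2 : k * (N / g) = N * k' := by rw [e1, hk', hN']; ring
    rw [← pow_mul, e2, pow_mul, hδ, one_pow]
  · intro hx
    obtain ⟨τ, hτ⟩ := IsAlgClosed.exists_pow_nat_eq x hgpos
    have hτN : τ ^ N = 1 := by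
      obtain ⟨N', hN'⟩ := hgN
      have e1 : N / g = N' := by rw [hN', Nat.mul_div_cancel_left _ hgpos]
      rw [hN', pow_mul, hτ, ← e1, hx]
    have hτ0 : τ ≠ 0 := st12_root_ne_zero hN hτN
    have hbez : (g : ℤ) = N * Nat.gcdA N k + k * Nat.gcdB N k := Nat.gcd_eq_gcd_ab N k
    set u := Nat.gcdA N k
    set v := Nat.gcdB N k
    refine ⟨τ ^ v, ?_, ?_⟩
    · calc (τ ^ v) ^ (N : ℕ) = (τ ^ v) ^ (N : ℤ) := (zpow_natCast _ N).symm
        _ = (τ ^ (N : ℤ)) ^ v := by rw [← zpow_mul, mul_comm, zpow_mul]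
        _ = 1 := by rw [zpow_natCast, hτN, one_zpow]
    · have hvk : v * (k : ℤ) = (g : ℤ) - N * u := by linear_combination -hbez
      calc (τ ^ v) ^ (k : ℕ) = τ ^ (v * (k : ℤ)) := by rw [← zpow_natCast (τ ^ v) k, ← zpow_mul]
        _ = τ ^ ((g : ℤ) - N * u) := by rw [hvk]
        _ = τ ^ (g : ℤ) * (τ ^ ((N : ℤ) * u))⁻¹ := by rw [zpow_sub₀ hτ0, div_eq_mul_inv]
        _ = x := by
            rw [zpow_mul, zpow_natCast, zpow_natCast, hτN, one_zpow, inv_one, mul_one, hτ]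

lemma st12_card_image_eq {A B C : Type*} [DecidableEq B] [DecidableEq C]
    (s : Finset A) (f : A → B) (g : A → C)
    (H : ∀ a ∈ s, ∀ a' ∈ s, (f a = f a' ↔ g a = g a')) :
    (s.image f).card = (s.image g).card := by
  classical
  induction s using Finset.induction_on with
  | empty => simp
  | @insert a s ha ih =>
    have H' : ∀ x ∈ s, ∀ y ∈ s, (f x = f y ↔ g x = g y) := fun x hx y hy =>
      H x (Finset.mem_insert_of_mem hx) y (Finset.mem_insert_of_mem hy)
    rw [Finset.image_insert, Finset.image_insert]
    by_cases hfa : f a ∈ s.image f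
    · have hga : g a ∈ s.image g := by
        obtain ⟨x, hx, hfx⟩ := Finset.mem_image.mp hfa
        exact Finset.mem_image.mpr ⟨x, hx,
          (H x (Finset.mem_insert_of_mem hx) a (Finset.mem_insert_self a s)).mp hfx⟩
      rw [Finset.insert_eq_self.mpr hfa, Finset.insert_eq_self.mpr hga]
      exact ih H'
    · have hga : g a ∉ s.image g := by
        intro hga
        obtain ⟨x, hx, hgx⟩ := Finset.mem_image.mp hga
        exact hfa (Finset.mem_image.mpr ⟨x, hx,
          (H x (Finset.mem_insert_of_mem hx) a (Finset.mem_insert_self a s)).mpr hgx⟩)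
      rw [Finset.card_insert_of_notMem hfa, Finset.card_insert_of_notMem hga, ih H']

lemma st12_starAct_div {n : ℕ} (hn : 0 < n) (ε : ℂ) (α : PSer) (j : ℕ) :
    starAct n ε α ((j : ℚ) / n) = ε ^ j * α ((j : ℚ) / n) := by
  have hnQ : (n : ℚ) ≠ 0 := Nat.cast_ne_zero.mpr hn.ne'
  show ε ^ (((j : ℚ) / n * n).num.toNat) * _ = _
  rw [div_mul_cancel₀ _ hnQ, Rat.num_natCast, Int.toNat_natCast]

theorem stmt12 (n : ℕ) (α : PSer) (hα : hasIndex n α) (hpos : posOrder α)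
    (b e : ℕ → ℕ) (hb0 : b 0 = n) (he0 : e 0 = n)
    (hbmin : ∀ k : ℕ, e k ≠ 1 →
      IsLeast {i : ℕ | ¬ (e k ∣ i) ∧ α ((i : ℚ) / n) ≠ 0} (b (k + 1)))
    (hgcd : ∀ k : ℕ, e (k + 1) = Nat.gcd (e k) (b (k + 1)))
    (h : ℕ) (hh : e h = 1) (hlt : ∀ k : ℕ, k < h → e k ≠ 1)
    (Zf : Set PSer) (hZf : Zf = orbit n α)
    (i : ℕ) (hi1 : 1 ≤ i) (hih : i ≤ h)
    (r : ℚ) (hr : r = (b i : ℚ) / (b 0 : ℚ))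
    (T : Set (Set PSer))
    (hT : T = {B : Set PSer | (∃ β : PSer, B = pball β r) ∧ (B ∩ Zf).Nonempty}) :
    T.Finite ∧ T.ncard = e 0 / e (i - 1) ∧
    (∀ B ∈ T, ∀ B' ∈ T, B ≠ B' → Disjoint B B') ∧
    (∀ B ∈ T, (B ∩ Zf).ncard = e (i - 1)) ∧
    (∀ β : PSer, pball β r ∈ T → ∃ c : ℂ, c ≠ 0 ∧
      FB n α β r = (X ^ (e (i - 1) / e i) - C c) ^ (e i)) := by
  classical
  obtain ⟨hn, hden, hmin⟩ := hα
  have hnQ : (n : ℚ) ≠ 0 := Nat.cast_ne_zero.mpr hn.ne'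
  have hnQpos : (0 : ℚ) < n := by exact_mod_cast hn
  have hi0 : (i - 1) + 1 = i := by omega
  have hih' : i - 1 < h := lt_of_lt_of_le (Nat.sub_lt hi1 one_pos) hih
  -- basic divisibility chain
  have hestep : ∀ k, e (k + 1) ∣ e k := fun k => (hgcd k) ▸ Nat.gcd_dvd_left _ _
  have hen : ∀ k, e k ∣ n := by
    intro k
    induction k with
    | zero => rw [he0]
    | succ k ih => exact (hestep k).trans ih
  have hepos : ∀ k, 0 < e k := by
    intro k
    rcases Nat.eq_zero_or_pos (e k) with h0 | h1
    · exfalso; have := Nat.eq_zero_of_zero_dvd (h0 ▸ hen k); omega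
    · exact h1
  have he'ne1 : e (i - 1) ≠ 1 := hlt _ hih'
  -- facts about b
  have hbIs : ∀ k, k < h → IsLeast {j : ℕ | ¬ (e k ∣ j) ∧ α ((j : ℚ) / n) ≠ 0} (b (k + 1)) :=
    fun k hk => hbmin k (hlt k hk)
  have hbmem : ∀ k, 1 ≤ k → k ≤ h → (¬ (e (k - 1) ∣ b k) ∧ α ((b k : ℚ) / n) ≠ 0) := by
    intro k hk1 hkh
    have hkh' : k - 1 < h := lt_of_lt_of_le (Nat.sub_lt hk1 one_pos) hkh
    have hk0 : k - 1 + 1 = k := by omega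
    have := (hbIs (k - 1) hkh').1
    rwa [hk0] at this
  have hrbn : r = (b i : ℚ) / n := by rw [hr, hb0]
  have haR : α r ≠ 0 := by rw [hrbn]; exact (hbmem i hi1 hih).2
  have hbipos : 0 < b i :=
    Nat.pos_of_ne_zero (fun h0 => (hbmem i hi1 hih).1 (h0 ▸ dvd_zero _))
  -- support divisibility below b (k+1)
  have hsupp : ∀ k, k < h → ∀ j : ℕ, j < b (k + 1) → α ((j : ℚ) / n) ≠ 0 → e k ∣ j := by
    intro k hk j hj hα0
    by_contra hnd
    have := (hbIs k hk).2 ⟨hnd, hα0⟩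
    omega
  -- b strictly monotone on [1, h]
  have hbstep : ∀ k, 1 ≤ k → k < h → b k < b (k + 1) := by
    intro k hk1 hkh
    have h2 := (hbIs k hkh).1
    have hk0 : k - 1 + 1 = k := by omega
    have hgk := hgcd (k - 1)
    rw [hk0] at hgk
    have h3 : e k ∣ b k := hgk ▸ Nat.gcd_dvd_right _ _
    have hek : e k ∣ e (k - 1) := hgk ▸ Nat.gcd_dvd_left _ _
    have h5 : b k ≤ b (k + 1) := by
      have hIs := hbIs (k - 1) (lt_of_lt_of_le (Nat.sub_lt hk1 one_pos) (le_of_lt hkh))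
      rw [hk0] at hIs
      exact hIs.2 ⟨fun hd => h2.1 (hek.trans hd), h2.2⟩
    exact lt_of_le_of_ne h5 (fun heq => h2.1 (heq ▸ h3))
  have hbmono : ∀ k k', 1 ≤ k → k < k' → k' ≤ h → b k < b k' := by
    intro k k' hk1 hkk' hk'h
    induction k' with
    | zero => omega
    | succ k'' ih =>
      have hstep : b k'' < b (k'' + 1) := hbstep k'' (by omega) (by omega)
      rcases eq_or_lt_of_le (Nat.lt_succ_iff.mp hkk') with rfl | hlt2
      · exact hstep
      · exact (ih hlt2 (by omega)).trans hstep
  -- gcd-power lemma along the chain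
  have hδe : ∀ (δ : ℂ), δ ^ n = 1 → ∀ k, (∀ j, 1 ≤ j → j ≤ k → δ ^ (b j) = 1) →
      δ ^ (e k) = 1 := by
    intro δ hδn k
    induction k with
    | zero => intro _; rw [he0]; exact hδn
    | succ k ih =>
      intro hall
      have h1 : δ ^ e k = 1 := ih (fun j hj1 hj2 => hall j hj1 (by omega))
      have h2 : δ ^ b (k + 1) = 1 := hall (k + 1) (by omega) le_rfl
      rw [hgcd k]; exact st12_pow_gcd_one h1 h2
  -- key pointwise equivalence
  have hkey : ∀ ε ε' : ℂ, ε ^ n = 1 → ε' ^ n = 1 →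
      (contGe (starAct n ε' α) (starAct n ε α) r ↔ ε ^ (e (i - 1)) = ε' ^ (e (i - 1))) := by
    intro ε ε' hε hε'
    have hε'0 : ε' ≠ 0 := st12_root_ne_zero hn hε'
    constructor
    · intro hc
      have hδn : (ε * ε'⁻¹) ^ n = 1 := by
        rw [mul_pow, inv_pow, hε, hε', inv_one, mul_one]
      have hbj : ∀ j, 1 ≤ j → j ≤ i - 1 → (ε * ε'⁻¹) ^ (b j) = 1 := by
        intro j h1 h2
        have hbji : b j < b i := hbmono j i h1 (by omega) hih
        have hq : ((b j : ℚ) / n) < r := by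
          rw [hrbn, div_lt_div_iff_of_pos_right hnQpos]
          exact_mod_cast hbji
        have hthis := hc ((b j : ℚ) / n) hq
        rw [st12_starAct_div hn, st12_starAct_div hn] at hthis
        have hmem := (hbmem j h1 (by omega)).2
        have hpow : ε' ^ (b j) = ε ^ (b j) := mul_right_cancel₀ hmem hthis
        rw [mul_pow, inv_pow, ← hpow, mul_inv_cancel₀ (pow_ne_zero _ hε'0)]
      have hδE := hδe (ε * ε'⁻¹) hδn (i - 1) hbj
      rw [mul_pow, inv_pow, mul_inv_eq_one₀ (pow_ne_zero _ hε'0)] at hδE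
      exact hδE
    · intro hE q hq
      by_cases h0 : α q = 0
      · show ε' ^ _ * α q = ε ^ _ * α q
        rw [h0, mul_zero, mul_zero]
      · obtain ⟨j, rfl⟩ := hden q h0
        rw [hrbn, div_lt_div_iff_of_pos_right hnQpos] at hq
        have hjb : j < b i := by exact_mod_cast hq
        have hdvd : e (i - 1) ∣ j := hsupp (i - 1) hih' j (by rwa [hi0]) h0
        obtain ⟨c, rfl⟩ := hdvd
        show starAct n ε' α _ = starAct n ε α _
        rw [st12_starAct_div hn, st12_starAct_div hn, pow_mul, pow_mul, hE]
  -- contGe equivalence-relation helpers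
  have htrans : ∀ (β ψ χ : PSer), contGe β ψ r → contGe β χ r → contGe ψ χ r :=
    fun β ψ χ h1 h2 q hq => (h1 q hq).symm.trans (h2 q hq)
  have hpball_eq : ∀ (β ψ : PSer), ψ ∈ pball β r → pball β r = pball ψ r := by
    intro β ψ hψ
    ext χ
    constructor
    · intro hχ; exact htrans β ψ χ hψ hχ
    · intro hχ q hq; exact (hψ q hq).trans (hχ q hq)
  -- injectivity of the root map
  have hroot_inj : ∀ ε ε' : ℂ, ε ^ n = 1 → ε' ^ n = 1 →
      starAct n ε α = starAct n ε' α → ε = ε' := by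
    intro ε ε' hε hε' heq
    have hε'0 : ε' ≠ 0 := st12_root_ne_zero hn hε'
    have hδn : (ε * ε'⁻¹) ^ n = 1 := by
      rw [mul_pow, inv_pow, hε, hε', inv_one, mul_one]
    have hbj : ∀ j, 1 ≤ j → j ≤ h → (ε * ε'⁻¹) ^ (b j) = 1 := by
      intro j h1 h2
      have hthis := congrFun heq ((b j : ℚ) / n)
      rw [st12_starAct_div hn, st12_starAct_div hn] at hthis
      have hpow : ε ^ b j = ε' ^ b j := mul_right_cancel₀ (hbmem j h1 h2).2 hthis
      rw [mul_pow, inv_pow, hpow, mul_inv_cancel₀ (pow_ne_zero _ hε'0)]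
    have hδ1 := hδe (ε * ε'⁻¹) hδn h hbj
    rw [hh, pow_one, mul_inv_eq_one₀ hε'0] at hδ1
    exact hδ1
  -- T as image of a Finset
  have hTeq : T = ↑((nthRootsFinset n (1 : ℂ)).image (fun ε => pball (starAct n ε α) r)) := by
    rw [hT]
    ext B
    simp only [Set.mem_setOf_eq, Finset.coe_image, Set.mem_image, Finset.mem_coe,
      Polynomial.mem_nthRootsFinset hn]
    constructor
    · rintro ⟨⟨β, rfl⟩, γ, hγ1, hγ2⟩
      rw [hZf] at hγ2
      obtain ⟨ε, hε, rfl⟩ := hγ2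
      exact ⟨ε, hε, (hpball_eq β _ hγ1).symm⟩
    · rintro ⟨ε, hε, rfl⟩
      refine ⟨⟨starAct n ε α, rfl⟩, starAct n ε α, fun q hq => rfl, ?_⟩
      rw [hZf]
      exact ⟨ε, hε, rfl⟩
  have hΦiff : ∀ ε ∈ nthRootsFinset n (1 : ℂ), ∀ ε' ∈ nthRootsFinset n (1 : ℂ),
      (pball (starAct n ε α) r = pball (starAct n ε' α) r ↔
        ε ^ (e (i - 1)) = ε' ^ (e (i - 1))) := by
    intro ε hε ε' hε'
    rw [Polynomial.mem_nthRootsFinset hn] at hε hε'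
    constructor
    · intro hΦ
      have hm : starAct n ε α ∈ pball (starAct n ε' α) r := by
        rw [← hΦ]; exact fun q hq => rfl
      exact (hkey ε ε' hε hε').mp hm
    · intro hE
      exact (hpball_eq _ _ ((hkey ε ε' hε hε').mpr hE)).symm
  have hgcdnE : Nat.gcd n (e (i - 1)) = e (i - 1) := Nat.gcd_eq_right (hen (i - 1))
  refine ⟨?_, ?_, ?_, ?_, ?_⟩
  -- finiteness
  · rw [hTeq]; exact Finset.finite_toSet _
  -- cardinality of T
  · rw [hTeq, Set.ncard_coe_finset,
      st12_card_image_eq _ _ (fun ε => ε ^ (e (i - 1))) hΦiff,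
      st12_image_pow hn (hepos (i - 1)), hgcdnE,
      (Complex.isPrimitiveRoot_exp _
        (Nat.div_pos (Nat.le_of_dvd hn (hen (i - 1))) (hepos (i - 1))).ne').card_nthRootsFinset,
      he0]
  -- disjointness
  · intro B hB B' hB' hne
    rw [hT] at hB hB'
    obtain ⟨⟨β, rfl⟩, -⟩ := hB
    obtain ⟨⟨β', rfl⟩, -⟩ := hB'
    rw [Set.disjoint_left]
    intro ψ h1 h2
    exact hne ((hpball_eq β ψ h1).trans (hpball_eq β' ψ h2).symm)
  -- number of roots in each ball
  · intro B hB
    rw [hTeq, Finset.coe_image] at hB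
    obtain ⟨ε₀, hε₀, rfl⟩ := hB
    rw [Finset.mem_coe, Polynomial.mem_nthRootsFinset hn] at hε₀
    have hset : pball (starAct n ε₀ α) r ∩ Zf =
        ↑(((nthRootsFinset n (1 : ℂ)).filter
            (fun x => x ^ (e (i - 1)) = ε₀ ^ (e (i - 1)))).image
          (fun ε => starAct n ε α)) := by
      ext γ
      simp only [Set.mem_inter_iff, Finset.coe_image, Set.mem_image, Finset.mem_coe,
        Finset.mem_filter, Polynomial.mem_nthRootsFinset hn, hZf, orbit, Set.mem_setOf_eq]
      constructor
      · rintro ⟨hγB, ε, hεn, rfl⟩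
        exact ⟨ε, ⟨⟨hεn, (hkey ε ε₀ hεn hε₀).mp hγB⟩, rfl⟩⟩
      · rintro ⟨ε, ⟨hεn, hE⟩, rfl⟩
        exact ⟨(hkey ε ε₀ hεn hε₀).mpr hE, ε, hεn, rfl⟩
    rw [hset, Set.ncard_coe_finset]
    have hinj : Set.InjOn (fun ε => starAct n ε α)
        ↑((nthRootsFinset n (1 : ℂ)).filter
            (fun x => x ^ (e (i - 1)) = ε₀ ^ (e (i - 1)))) := by
      intro x hx y hy hxy
      simp only [Finset.coe_filter, Set.mem_setOf_eq, Polynomial.mem_nthRootsFinset hn] at hx hy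
      exact hroot_inj x y hx.1 hy.1 hxy
    rw [Finset.card_image_of_injOn hinj, st12_coset_card hn hε₀, hgcdnE]
  -- the polynomial F_B
  · intro β hβ
    rw [hT] at hβ
    obtain ⟨-, γ, hγ1, hγ2⟩ := hβ
    rw [hZf] at hγ2
    obtain ⟨ε₀, hε₀, rfl⟩ := hγ2
    have hε₀0 : ε₀ ≠ 0 := st12_root_ne_zero hn hε₀
    set c' : ℂ := ε₀ ^ (b i) * α r with hc'
    have hc'0 : c' ≠ 0 := mul_ne_zero (pow_ne_zero _ hε₀0) haR
    set m' : ℕ := e (i - 1) / e i with hm'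
    have hgEd : Nat.gcd (e (i - 1)) (b i) = e i := by
      have := hgcd (i - 1); rw [hi0] at this; exact this.symm
    have hdE : e i ∣ e (i - 1) := hgEd ▸ Nat.gcd_dvd_left _ _
    have hm'pos : 0 < m' := Nat.div_pos (Nat.le_of_dvd (hepos _) hdE) (hepos i)
    refine ⟨c' ^ m', pow_ne_zero _ hc'0, ?_⟩
    have hfilter : (nthRootsFinset n (1 : ℂ)).filter (fun ε => starAct n ε α ∈ pball β r)
        = (nthRootsFinset n (1 : ℂ)).filter (fun x => x ^ (e (i - 1)) = ε₀ ^ (e (i - 1))) := by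
      apply Finset.filter_congr
      intro x hx
      rw [Polynomial.mem_nthRootsFinset hn] at hx
      constructor
      · intro hmem
        exact (hkey x ε₀ hx hε₀).mp (htrans β _ _ hγ1 hmem)
      · intro hE
        exact fun q hq => (hγ1 q hq).trans ((hkey x ε₀ hx hε₀).mpr hE q hq)
    have heval : ∀ δ : ℂ, starAct n (ε₀ * δ) α r = c' * δ ^ (b i) := by
      intro δ
      rw [hrbn, st12_starAct_div hn, mul_pow, hc', hrbn]
      ring
    have hmulinj : ∀ x ∈ nthRootsFinset (e (i - 1)) (1 : ℂ), ∀ y ∈ nthRootsFinset (e (i - 1)) (1 : ℂ),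
        ε₀ * x = ε₀ * y → x = y := fun x _ y _ hxy => mul_left_cancel₀ hε₀0 hxy
    set ζ : ℂ := Complex.exp (2 * Real.pi * Complex.I / m') with hζdef
    have hζ : IsPrimitiveRoot ζ m' := Complex.isPrimitiveRoot_exp m' hm'pos.ne'
    have : NeZero m' := ⟨hm'pos.ne'⟩
    calc FB n α β r
        = ∏ ε ∈ (nthRootsFinset n (1 : ℂ)).filter
            (fun x => x ^ (e (i - 1)) = ε₀ ^ (e (i - 1))), (X - C (starAct n ε α r)) := by
          simp only [FB]
          rw [hfilter]
      _ = ∏ w ∈ nthRootsFinset (e (i - 1)) (1 : ℂ), (X - C (starAct n (ε₀ * w) α r)) := by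
          rw [st12_coset_filter hn hε₀, hgcdnE, Finset.prod_image hmulinj]
      _ = ∏ w ∈ nthRootsFinset (e (i - 1)) (1 : ℂ), (X - C (c' * w ^ (b i))) := by
          exact Finset.prod_congr rfl (fun w _ => by rw [heval])
      _ = ∏ η ∈ (nthRootsFinset (e (i - 1)) (1 : ℂ)).image (fun w => w ^ (b i)),
            (X - C (c' * η)) ^
              (((nthRootsFinset (e (i - 1)) (1 : ℂ)).filter (fun w => w ^ (b i) = η)).card) :=
          Finset.prod_comp (fun η => X - C (c' * η)) (fun w => w ^ (b i))
      _ = ∏ η ∈ (nthRootsFinset (e (i - 1)) (1 : ℂ)).image (fun w => w ^ (b i)),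
            (X - C (c' * η)) ^ (e i) := by
          apply Finset.prod_congr rfl
          intro η hη
          obtain ⟨δ₁, hδ₁, hδ₁e⟩ := Finset.mem_image.mp hη
          rw [Polynomial.mem_nthRootsFinset (hepos (i - 1))] at hδ₁
          rw [← hδ₁e, st12_coset_card (hepos (i - 1)) hδ₁, hgEd]
      _ = ∏ η ∈ nthRootsFinset m' (1 : ℂ), (X - C (c' * η)) ^ (e i) := by
          rw [st12_image_pow (hepos (i - 1)) hbipos, hgEd]
      _ = (∏ η ∈ nthRootsFinset m' (1 : ℂ), (X - C (c' * η))) ^ (e i) :=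
          Finset.prod_pow _ _ _
      _ = (∏ j ∈ Finset.range m', (X - C (ζ ^ j * c'))) ^ (e i) := by
          congr 1
          refine (Finset.prod_bij (fun j _ => ζ ^ j) ?_ ?_ ?_ ?_).symm
          · intro j hj
            rw [Polynomial.mem_nthRootsFinset hm'pos, ← pow_mul, mul_comm j m', pow_mul,
              hζ.pow_eq_one, one_pow]
          · intro j₁ h₁ j₂ h₂ hpe
            exact hζ.pow_inj (Finset.mem_range.mp h₁) (Finset.mem_range.mp h₂) hpe
          · intro η hη
            obtain ⟨j, hj, hje⟩ :=
              hζ.eq_pow_of_pow_eq_one ((Polynomial.mem_nthRootsFinset hm'pos (1 : ℂ)).mp hη)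
            exact ⟨j, Finset.mem_range.mpr hj, hje⟩
          · intro j hj
            rw [mul_comm]
      _ = (X ^ m' - C (c' ^ m')) ^ (e i) := by
          rw [← X_pow_sub_C_eq_prod hζ hm'pos rfl]
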